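/- Let x_1,...,x_n be independent Bernoulli random variables with means p_i, p̄ = (1/n)∑p_i, and let q ∈ [0,1], r > 0, ε > 0, δ ∈ (0,1) satisfy |q − p̄| ≤ r. Then with probability at least 1 − δ, p̄ − (1/n)∑x_i < εr + √(2q(1−q)log(1/δ)/n) + (2/3 + 1/(2ε))·log(1/δ)/n. -/

import Mathlib

open MeasureTheory ProbabilityTheory Nat

lemma real_exp_tsum (x : ℝ) : Real.exp x = ∑' n : ℕ, x ^ n / n ! := by
  rw [Real.exp_eq_exp_ℝ, NormedSpace.exp_eq_tsum_div]

lemma fact_ge (k : ℕ) : (2 * 3 ^ k : ℝ) ≤ (k + 2)! := by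
  induction k with
  | zero => norm_num
  | succ k ih =>
    have h : ((k + 3)! : ℝ) = (k + 3) * (k + 2)! := by
      rw [show k + 3 = (k + 2) + 1 by ring, Nat.factorial_succ]; push_cast; ring
    calc (2 * 3 ^ (k+1) : ℝ) = 3 * (2 * 3 ^ k) := by ring
    _ ≤ 3 * (k + 2)! := by nlinarith [ih]
    _ ≤ (k + 3) * (k + 2)! := by
        have : (0:ℝ) ≤ ((k+2)! : ℝ) := by positivity
        nlinarith
    _ = ((k+3)! : ℝ) := by rw [show (k+1)+2 = k+3 from rfl, h]

lemma core (p s : ℝ) (hp0 : 0 ≤ p) (hp1 : p ≤ 1) (hs0 : 0 ≤ s) (hs3 : s < 3) :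
    (1 - p) * Real.exp (s * p) + p * Real.exp (s * (p - 1)) ≤
      Real.exp (p * (1 - p) * (s ^ 2 / 2) * (1 - s / 3)⁻¹) := by
  set g : ℕ → ℝ := fun k => (1 - p) * ((s * p) ^ k / k !) + p * ((s * (p - 1)) ^ k / k !)
    with hg
  have S1 : Summable (fun k : ℕ => (1 - p) * ((s * p) ^ k / k !)) :=
    (Real.summable_pow_div_factorial (s * p)).mul_left _
  have S2 : Summable (fun k : ℕ => p * ((s * (p - 1)) ^ k / k !)) :=
    (Real.summable_pow_div_factorial (s * (p - 1))).mul_left _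
  have Sg : Summable g := S1.add S2
  have hL : (1 - p) * Real.exp (s * p) + p * Real.exp (s * (p - 1)) = ∑' k, g k := by
    rw [real_exp_tsum, real_exp_tsum, ← tsum_mul_left, ← tsum_mul_left, ← Summable.tsum_add S1 S2]
  have Sg1 : Summable (fun k => g (k + 1)) := (summable_nat_add_iff 1).2 Sg
  have Sg2 : Summable (fun k => g (k + 2)) := (summable_nat_add_iff 2).2 Sg
  have hsplit : ∑' k, g k = g 0 + g 1 + ∑' k, g (k + 2) := by
    rw [Summable.tsum_eq_zero_add Sg, Summable.tsum_eq_zero_add Sg1]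
    have he : ∀ b : ℕ, b + 1 + 1 = b + 2 := fun b => rfl
    simp only [he]
    ring
  have hg0 : g 0 = 1 := by simp [hg]
  have hg1 : g 1 = 0 := by simp [hg, Nat.factorial]; ring
  have hgeo : Summable (fun k : ℕ => p * (1 - p) * (s ^ 2 / 2) * (s / 3) ^ k) := by
    refine Summable.mul_left _ (summable_geometric_of_lt_one (by positivity) (by linarith))
  have hterm : ∀ k : ℕ, g (k + 2) ≤ p * (1 - p) * (s ^ 2 / 2) * (s / 3) ^ k := by
    intro k
    have hm : (1 - p) * p ^ (k + 2) + p * (p - 1) ^ (k + 2) ≤ p * (1 - p) := by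
      have h1 : p ^ (k + 2) ≤ p ^ 2 := pow_le_pow_of_le_one hp0 hp1 (by omega)
      have h2 : (p - 1) ^ (k + 2) ≤ (1 - p) ^ 2 := by
        calc (p - 1) ^ (k + 2) ≤ |p - 1| ^ (k + 2) := by
              exact le_trans (le_abs_self _) (le_of_eq (abs_pow _ _))
          _ = (1 - p) ^ (k + 2) := by rw [abs_sub_comm, abs_of_nonneg (by linarith)]
          _ ≤ (1 - p) ^ 2 := pow_le_pow_of_le_one (by linarith) (by linarith) (by omega)
      nlinarith [h1, h2, sq_nonneg p, sq_nonneg (1 - p)]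
    have hgk : g (k + 2) = s ^ (k + 2) * ((1 - p) * p ^ (k + 2) + p * (p - 1) ^ (k + 2))
        / (k + 2)! := by
      simp only [hg, mul_pow]; ring
    have hfac : (0:ℝ) < ((k + 2)! : ℝ) := by positivity
    have hspos : (0:ℝ) ≤ s ^ (k + 2) := by positivity
    calc g (k + 2) ≤ s ^ (k + 2) * (p * (1 - p)) / (k + 2)! := by
          rw [hgk]; gcongr
      _ ≤ s ^ (k + 2) * (p * (1 - p)) / (2 * 3 ^ k) := by
          have hpp : (0:ℝ) ≤ p * (1 - p) := by nlinarith
          exact div_le_div_of_nonneg_left (by positivity) (by positivity) (fact_ge k)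
      _ = p * (1 - p) * (s ^ 2 / 2) * (s / 3) ^ k := by
          rw [div_pow, pow_add]
          field_simp
  have htail : ∑' k, g (k + 2) ≤ p * (1 - p) * (s ^ 2 / 2) * (1 - s / 3)⁻¹ := by
    calc ∑' k, g (k + 2) ≤ ∑' k : ℕ, p * (1 - p) * (s ^ 2 / 2) * (s / 3) ^ k :=
          Summable.tsum_le_tsum hterm Sg2 hgeo
      _ = p * (1 - p) * (s ^ 2 / 2) * (1 - s / 3)⁻¹ := by
          rw [tsum_mul_left, tsum_geometric_of_lt_one (by positivity) (by linarith)]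
  have hfinal := Real.add_one_le_exp (p * (1 - p) * (s ^ 2 / 2) * (1 - s / 3)⁻¹)
  rw [hL, hsplit, hg0, hg1]
  linarith

section Helpers

lemma sqrt_add_le' (x y : ℝ) (hx : 0 ≤ x) (hy : 0 ≤ y) :
    Real.sqrt (x + y) ≤ Real.sqrt x + Real.sqrt y := by
  have h : x + y ≤ (Real.sqrt x + Real.sqrt y) ^ 2 := by
    have hxx := Real.sq_sqrt hx
    have hyy := Real.sq_sqrt hy
    nlinarith [Real.sqrt_nonneg x, Real.sqrt_nonneg y]
  calc Real.sqrt (x + y) ≤ Real.sqrt ((Real.sqrt x + Real.sqrt y) ^ 2) := Real.sqrt_le_sqrt h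
    _ = Real.sqrt x + Real.sqrt y := by
        rw [Real.sqrt_sq (by positivity)]

lemma choose_s (L V a : ℝ) (hL : 0 < L) (hV : 0 ≤ V)
    (ha : 2 / 3 * L + Real.sqrt (2 * L * V) ≤ a) :
    ∃ s : ℝ, 0 ≤ s ∧ s < 3 ∧ L ≤ s * a - V * (s ^ 2 / 2) * (1 - s / 3)⁻¹ := by
  have hsq : Real.sqrt (2 * L * V) ^ 2 = 2 * L * V := Real.sq_sqrt (by positivity)
  have hsn : 0 ≤ Real.sqrt (2 * L * V) := Real.sqrt_nonneg _
  have ha0 : 0 < a := by nlinarith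
  rcases eq_or_lt_of_le hV with hV0 | hV0
  · refine ⟨3 / 2, by norm_num, by norm_num, ?_⟩
    rw [← hV0]
    have : Real.sqrt (2 * L * V) = 0 := by rw [← hV0]; simp
    nlinarith
  · set d := V + a / 3 with hd
    have hd0 : 0 < d := by positivity
    refine ⟨a / d, by positivity, ?_, ?_⟩
    · rw [div_lt_iff₀ hd0, hd]; nlinarith
    · have hval : a / d * a - V * ((a / d) ^ 2 / 2) * (1 - a / d / 3)⁻¹ = a ^ 2 / (2 * d) := by
        have h1 : 1 - a / d / 3 = V / d := by field_simp; ring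
        rw [h1]
        field_simp
        ring
      rw [hval, le_div_iff₀ (by positivity)]
      simp only [hd]
      nlinarith [hsq, hsn, ha, hL.le, mul_nonneg hL.le hsn]

variable {Ω : Type*} [MeasurableSpace Ω] {μ : Measure Ω} [IsProbabilityMeasure μ]

lemma ber_int {x : Ω → ℝ} (hm : Measurable x) (hB : ∀ ω, x ω = 0 ∨ x ω = 1) :
    Integrable x μ := by
  refine (integrable_const (1:ℝ)).mono' hm.aestronglyMeasurable (ae_of_all _ fun ω => ?_)
  rcases hB ω with h | h <;> simp [h]

lemma ber_mean_mem {x : Ω → ℝ} (hm : Measurable x) (hB : ∀ ω, x ω = 0 ∨ x ω = 1) :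
    (0:ℝ) ≤ ∫ ω, x ω ∂μ ∧ (∫ ω, x ω ∂μ) ≤ 1 := by
  constructor
  · refine integral_nonneg fun ω => ?_
    rcases hB ω with h | h <;> simp [h]
  · have h1 : (∫ ω, x ω ∂μ) ≤ ∫ _, (1:ℝ) ∂μ := by
      refine integral_mono (ber_int hm hB) (integrable_const 1) fun ω => ?_
      rcases hB ω with h | h <;> simp [h]
    simpa using h1

lemma ber_exp_int (c : ℝ) {x : Ω → ℝ} (hm : Measurable x) (hB : ∀ ω, x ω = 0 ∨ x ω = 1) :
    Integrable (fun ω => Real.exp (c * x ω)) μ := by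
  refine (integrable_const (Real.exp |c|)).mono'
    ((hm.const_mul c).exp).aestronglyMeasurable (ae_of_all _ fun ω => ?_)
  rw [Real.norm_eq_abs, abs_of_pos (Real.exp_pos _), Real.exp_le_exp]
  rcases hB ω with h | h
  · rw [h, mul_zero]; positivity
  · rw [h, mul_one]; exact le_abs_self c

lemma ber_mgf (c : ℝ) {x : Ω → ℝ} (hm : Measurable x) (hB : ∀ ω, x ω = 0 ∨ x ω = 1) :
    mgf x μ c = 1 + (Real.exp c - 1) * ∫ ω, x ω ∂μ := by
  have hpt : ∀ ω, Real.exp (c * x ω) = 1 + (Real.exp c - 1) * x ω := fun ω => by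
    rcases hB ω with h | h <;> simp [h]
  unfold mgf
  rw [integral_congr_ae (ae_of_all _ hpt)]
  rw [integral_add (integrable_const 1) ((ber_int hm hB).const_mul _)]
  rw [MeasureTheory.integral_const_mul]
  simp

end Helpers

set_option maxHeartbeats 1000000 in
/-- Bernstein's bound with perturbation (lower deviation): for independent Bernoulli
variables with means `pᵢ`, average mean `p̄`, and `q ∈ [0,1]` with `|q - p̄| ≤ r`,
with probability at least `1 - δ`,
`p̄ - (1/n)∑xᵢ < εr + √(2q(1-q)log(1/δ)/n) + (2/3 + 1/(2ε))·log(1/δ)/n`. -/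
theorem stmt7 {Ω : Type*} [MeasurableSpace Ω] (μ : Measure Ω) [IsProbabilityMeasure μ]
    {n : ℕ} (hn : 0 < n) (x : Fin n → Ω → ℝ)
    (hmeas : ∀ i, Measurable (x i))
    (hBer : ∀ i, ∀ ω, x i ω = 0 ∨ x i ω = 1)
    (hind : iIndepFun x μ)
    (p : Fin n → ℝ) (hp : ∀ i, p i = ∫ ω, x i ω ∂μ)
    (q r ε δ : ℝ) (hq : q ∈ Set.Icc (0 : ℝ) 1) (hr : 0 < r) (hε : 0 < ε)
    (hδ : δ ∈ Set.Ioo (0 : ℝ) 1)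
    (hqp : |q - (∑ i, p i) / n| ≤ r) :
    1 - δ ≤ (μ {ω | (∑ i, p i) / n - (∑ i, x i ω) / n <
        ε * r + Real.sqrt (2 * q * (1 - q) * Real.log (1 / δ) / n) +
        (2 / 3 + 1 / (2 * ε)) * Real.log (1 / δ) / n}).toReal := by
  obtain ⟨hq0, hq1⟩ := hq
  obtain ⟨hδ0, hδ1⟩ := hδ
  set L := Real.log (1 / δ) with hLdef
  have hL : 0 < L := Real.log_pos (by rw [lt_div_iff₀ hδ0]; linarith)
  have hn' : (0:ℝ) < n := by exact_mod_cast hn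
  have hpi : ∀ i, 0 ≤ p i ∧ p i ≤ 1 := fun i => by
    rw [hp i]; exact ber_mean_mem (hmeas i) (hBer i)
  set P := ∑ i, p i with hP
  have hP0 : 0 ≤ P := Finset.sum_nonneg fun i _ => (hpi i).1
  have hPn : P ≤ n := by
    calc P ≤ ∑ _i : Fin n, (1:ℝ) := Finset.sum_le_sum fun i _ => (hpi i).2
      _ = n := by simp
  set pbar := P / n with hpbar
  have hpbar0 : 0 ≤ pbar := by positivity
  have hpbar1 : pbar ≤ 1 := by rw [hpbar, div_le_one hn']; exact hPn
  have hnp : (n:ℝ) * pbar = P := by rw [hpbar]; field_simp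
  set B := ε * r + Real.sqrt (2 * q * (1 - q) * L / n) + (2 / 3 + 1 / (2 * ε)) * L / n with hB
  set a := n * B with ha
  set V := ∑ i, p i * (1 - p i) with hV
  have hV0 : 0 ≤ V := Finset.sum_nonneg fun i _ => by nlinarith [(hpi i).1, (hpi i).2]
  -- V ≤ n pbar (1 - pbar)
  have hcs : P ^ 2 ≤ n * ∑ i, (p i) ^ 2 := by
    have := sq_sum_le_card_mul_sum_sq (s := (Finset.univ : Finset (Fin n))) (f := p)
    simpa [hP] using this
  have hVeq : V = P - ∑ i, (p i) ^ 2 := by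
    rw [hV, hP, ← Finset.sum_sub_distrib]
    exact Finset.sum_congr rfl fun i _ => by ring
  have hVle : V ≤ n * (pbar * (1 - pbar)) := by
    have h1 : n * (pbar * (1 - pbar)) = P - P ^ 2 / n := by
      rw [hpbar]; field_simp
    have h2 : P ^ 2 / n ≤ ∑ i, (p i) ^ 2 := by
      rw [div_le_iff₀ hn']; nlinarith [hcs]
    rw [hVeq, h1]; linarith
  -- key: 2/3 L + sqrt(2 L V) ≤ a
  have hsq1 : (n:ℝ) * Real.sqrt (2 * q * (1 - q) * L / n) =
      Real.sqrt (2 * L * n * (q * (1 - q))) := by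
    have hx0 : (0:ℝ) ≤ 2 * L * n * (q * (1 - q)) := by
      have : 0 ≤ q * (1 - q) := by nlinarith
      positivity
    rw [show 2 * q * (1 - q) * L / (n:ℝ) = 2 * L * n * (q * (1 - q)) / (n:ℝ) ^ 2 by
      field_simp]
    rw [Real.sqrt_div hx0, Real.sqrt_sq hn'.le]
    field_simp
  have hpq : pbar * (1 - pbar) ≤ q * (1 - q) + r := by
    have habs := abs_le.mp hqp
    nlinarith [habs.1, habs.2,
      mul_nonneg (show (0:ℝ) ≤ r - (pbar - q) by linarith [habs.1])
        (show (0:ℝ) ≤ 2 - pbar - q by linarith),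
      mul_nonneg (show (0:ℝ) ≤ r + (pbar - q) by linarith [habs.2])
        (show (0:ℝ) ≤ pbar + q by linarith)]
  have hAM : Real.sqrt (2 * L * n * r) ≤ n * (ε * r) + 1 / (2 * ε) * L := by
    have h3 : 2 * (n * (ε * r)) * (1 / (2 * ε) * L) = n * r * L := by
      field_simp
    have h2 : 2 * L * n * r ≤ (n * (ε * r) + 1 / (2 * ε) * L) ^ 2 := by
      nlinarith [sq_nonneg (n * (ε * r) - 1 / (2 * ε) * L), h3]
    calc Real.sqrt (2 * L * n * r) ≤ Real.sqrt ((n * (ε * r) + 1 / (2 * ε) * L) ^ 2) :=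
          Real.sqrt_le_sqrt h2
      _ = n * (ε * r) + 1 / (2 * ε) * L := by
          rw [Real.sqrt_sq (by positivity)]
  have haeq : a = n * (ε * r) + Real.sqrt (2 * L * n * (q * (1 - q))) +
      (2 / 3) * L + 1 / (2 * ε) * L := by
    rw [ha, hB, mul_add, mul_add, hsq1]
    have : (n:ℝ) * ((2 / 3 + 1 / (2 * ε)) * L / n) = (2 / 3) * L + 1 / (2 * ε) * L := by
      field_simp
    rw [this]; ring
  have hkey : 2 / 3 * L + Real.sqrt (2 * L * V) ≤ a := by
    have hs1 : Real.sqrt (2 * L * V) ≤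
        Real.sqrt (2 * L * n * (q * (1 - q)) + 2 * L * n * r) := by
      apply Real.sqrt_le_sqrt
      have t1 : 2 * L * V ≤ 2 * L * (n * (pbar * (1 - pbar))) :=
        mul_le_mul_of_nonneg_left hVle (by positivity)
      have t2 := mul_le_mul_of_nonneg_left hpq (show (0:ℝ) ≤ 2 * L * n by positivity)
      nlinarith [t1, t2]
    have hs2 : Real.sqrt (2 * L * n * (q * (1 - q)) + 2 * L * n * r) ≤
        Real.sqrt (2 * L * n * (q * (1 - q))) + Real.sqrt (2 * L * n * r) := by
      apply sqrt_add_le'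
      · have : 0 ≤ q * (1 - q) := by nlinarith
        positivity
      · positivity
    rw [haeq]
    linarith
  obtain ⟨s, hs0, hs3, hsL⟩ := choose_s L V a hL hV0 hkey
  -- Chernoff
  set X := fun ω => ∑ i, x i ω with hX
  have hXfun : X = ∑ i, x i := by funext ω; simp [hX]
  have hXm : Measurable X := Finset.measurable_sum Finset.univ fun i _ => hmeas i
  have hX0 : ∀ ω, 0 ≤ X ω := fun ω => Finset.sum_nonneg fun i _ => by
    rcases hBer i ω with h | h <;> simp [h]
  have hint : Integrable (fun ω => Real.exp (-s * X ω)) μ := by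
    refine (integrable_const (1:ℝ)).mono' ((hXm.const_mul (-s)).exp).aestronglyMeasurable
      (ae_of_all _ fun ω => ?_)
    rw [Real.norm_eq_abs, abs_of_pos (Real.exp_pos _)]
    rw [show (1:ℝ) = Real.exp 0 by simp, Real.exp_le_exp]
    nlinarith [hX0 ω, hs0]
  have hch := measure_le_le_exp_mul_mgf (μ := μ) (X := X) (t := -s) (n * pbar - a)
    (neg_nonpos.mpr hs0) hint
  set D := s ^ 2 / 2 * (1 - s / 3)⁻¹ with hD
  have hD0 : 0 ≤ D := by
    have : 0 < 1 - s / 3 := by linarith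
    positivity
  have hmgfi : ∀ i : Fin n, mgf (x i) μ (-s) ≤ Real.exp (p i * (1 - p i) * D - s * p i) := by
    intro i
    have hcore := core (p i) s (hpi i).1 (hpi i).2 hs0 hs3
    have e1 : Real.exp (s * (p i - 1)) = Real.exp (s * p i) * Real.exp (-s) := by
      rw [← Real.exp_add]; ring_nf
    have hfac : (1:ℝ) + (Real.exp (-s) - 1) * p i =
        ((1 - p i) * Real.exp (s * p i) + p i * Real.exp (s * (p i - 1))) *
          Real.exp (-(s * p i)) := by
      rw [e1, Real.exp_neg (s * p i)]
      have h0 := Real.exp_ne_zero (s * p i)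
      field_simp
      ring
    rw [ber_mgf (-s) (hmeas i) (hBer i), ← hp i, hfac]
    calc ((1 - p i) * Real.exp (s * p i) + p i * Real.exp (s * (p i - 1))) *
          Real.exp (-(s * p i))
        ≤ Real.exp (p i * (1 - p i) * (s ^ 2 / 2) * (1 - s / 3)⁻¹) *
          Real.exp (-(s * p i)) := by
          exact mul_le_mul_of_nonneg_right hcore (Real.exp_pos _).le
      _ = Real.exp (p i * (1 - p i) * D - s * p i) := by
          rw [← Real.exp_add, hD]; ring_nf
  have hprod : mgf X μ (-s) ≤ Real.exp (V * D - s * P) := by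
    rw [hXfun, hind.mgf_sum hmeas Finset.univ]
    calc ∏ i, mgf (x i) μ (-s)
        ≤ ∏ i, Real.exp (p i * (1 - p i) * D - s * p i) :=
          Finset.prod_le_prod (fun i _ => mgf_nonneg) (fun i _ => hmgfi i)
      _ = Real.exp (∑ i, (p i * (1 - p i) * D - s * p i)) := (Real.exp_sum _ _).symm
      _ = Real.exp (V * D - s * P) := by
          congr 1
          rw [hV, hP, Finset.sum_mul, Finset.mul_sum, ← Finset.sum_sub_distrib]
  have hEbound : (μ {ω | X ω ≤ n * pbar - a}).toReal ≤ δ := by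
    calc (μ {ω | X ω ≤ n * pbar - a}).toReal
        ≤ Real.exp (-(-s) * (n * pbar - a)) * mgf X μ (-s) := hch
      _ ≤ Real.exp (-(-s) * (n * pbar - a)) * Real.exp (V * D - s * P) := by
          exact mul_le_mul_of_nonneg_left hprod (Real.exp_pos _).le
      _ = Real.exp (s * (n * pbar) - s * a + (V * D - s * P)) := by
          rw [← Real.exp_add]; ring_nf
      _ = Real.exp (V * D - s * a) := by rw [hnp]; ring_nf
      _ ≤ Real.exp (-L) := by
          apply Real.exp_le_exp.mpr
          have : V * (s ^ 2 / 2) * (1 - s / 3)⁻¹ = V * D := by rw [hD]; ring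
          linarith [hsL, this.symm.le, this.le]
      _ = δ := by
          rw [hLdef, Real.log_div one_ne_zero (ne_of_gt hδ0)]
          simp [Real.exp_log hδ0]
  -- assemble
  set E := {ω | X ω ≤ n * pbar - a} with hE
  have hEmeas : MeasurableSet E := measurableSet_le hXm measurable_const
  have hTc : {ω | P / n - (∑ i, x i ω) / n < B} = Eᶜ := by
    ext ω
    simp only [hE, Set.mem_setOf_eq, Set.mem_compl_iff, not_le]
    have hXω : X ω = ∑ i, x i ω := rfl
    rw [hXω]
    rw [ha]
    constructor
    · intro h
      rw [← sub_div, div_lt_iff₀ hn'] at h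
      linarith [hnp, h]
    · intro h
      rw [← sub_div, div_lt_iff₀ hn']
      linarith [hnp, h]
  rw [hTc, prob_compl_eq_one_sub hEmeas]
  have htr : ((1 : ENNReal) - μ E).toReal = 1 - (μ E).toReal := by
    rw [ENNReal.toReal_sub_of_le prob_le_one ENNReal.one_ne_top]
    simp
  rw [htr]
  linarith [hEbound]
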